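/- arXiv:2003.02458 — 8 statements merged into one kernel-verified Lean document; each statement's English description precedes it below -/
import Mathlib

section
/- Suppose G_1, …, G_K and G_z are positive definite Hermitian M×M complex matrices. Then the function J_W(W) = Σ_{k=1}^K w_k^H G_k w_k + trace(W_z^H G_z W_z) − 2 log|det W|, defined on the set of invertible complex M×M matrices W, is bounded from below and attains its minimum at some invertible matrix W. -/
/- STATEMENT 0.
M×M complex matrices are encoded as matrices indexed by `Fin K ⊕ Fin L`,
where `M = K + L`, `K ≥ 1`, `L = M - K ≥ 1`. The first `K` columns (indexed by
`Sum.inl`) form `W_s` (with columns `w_k`) and the last `L` columns (indexed by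
`Sum.inr`) form `W_z`. -/

open Matrix
open scoped ComplexOrder

/-- The cost function
`J_W(W) = Σ_{k=1}^K w_k^H G_k w_k + trace(W_z^H G_z W_z) − 2 log|det W|`. -/
noncomputable def JW {K L : ℕ}
    (G : Fin K → Matrix (Fin K ⊕ Fin L) (Fin K ⊕ Fin L) ℂ)
    (Gz : Matrix (Fin K ⊕ Fin L) (Fin K ⊕ Fin L) ℂ)
    (W : Matrix (Fin K ⊕ Fin L) (Fin K ⊕ Fin L) ℂ) : ℝ :=
  (∑ k : Fin K,
      (star (fun i => W i (Sum.inl k)) ⬝ᵥ ((G k) *ᵥ (fun i => W i (Sum.inl k))))).re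
    + (Matrix.trace ((W.submatrix id Sum.inr)ᴴ * Gz * (W.submatrix id Sum.inr))).re
    - 2 * Real.log ‖W.det‖

attribute [local instance] Matrix.normedAddCommGroup Matrix.normedSpace

namespace JWAux

variable {n : Type*} [Fintype n] [DecidableEq n]

/-- The real quadratic form associated to a matrix. -/
noncomputable def q (A : Matrix n n ℂ) (v : n → ℂ) : ℝ :=
  (star v ⬝ᵥ A *ᵥ v).re

omit [DecidableEq n] in
lemma trace_eq (B : Matrix n n ℂ) {m : Type*} [Fintype m] (A : Matrix n m ℂ) :
    (Aᴴ * B * A).trace = ∑ j : m, star (fun i => A i j) ⬝ᵥ B *ᵥ (fun i => A i j) := by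
  simp only [Matrix.trace, Matrix.mul_apply, Matrix.diag, dotProduct, Matrix.mulVec,
    conjTranspose_apply, Finset.mul_sum, Finset.sum_mul, Pi.star_apply, RCLike.star_def]
  refine Finset.sum_congr rfl fun x _ => ?_
  rw [Finset.sum_comm]
  exact Finset.sum_congr rfl fun a _ => Finset.sum_congr rfl fun b _ => by ring

omit [DecidableEq n] in
lemma q_smul (A : Matrix n n ℂ) (c : ℝ) (v : n → ℂ) : q A (c • v) = c ^ 2 * q A v := by
  unfold q
  have : star (c • v) ⬝ᵥ A *ᵥ (c • v) = ((c ^ 2 : ℝ) : ℂ) * (star v ⬝ᵥ A *ᵥ v) := by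
    simp only [dotProduct, Matrix.mulVec, Pi.smul_apply, Pi.star_apply, star_smul,
      Finset.mul_sum, Finset.smul_sum, Complex.real_smul, star_trivial]
    refine Finset.sum_congr rfl fun x _ => Finset.sum_congr rfl fun y _ => ?_
    simp only [star_mul', RCLike.star_def, Complex.conj_ofReal]
    push_cast
    ring
  rw [this, Complex.re_ofReal_mul]

omit [DecidableEq n] in
lemma q_nonneg {A : Matrix n n ℂ} (hA : A.PosSemidef) (v : n → ℂ) : 0 ≤ q A v := by
  exact hA.re_dotProduct_nonneg v

omit [DecidableEq n] in
lemma q_pos {A : Matrix n n ℂ} (hA : A.PosDef) {v : n → ℂ} (hv : v ≠ 0) : 0 < q A v := by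
  exact hA.re_dotProduct_pos hv

/-- Entry-wise bound for the determinant. -/
lemma abs_det_le (W : Matrix n n ℂ) :
    ‖W.det‖ ≤ (Fintype.card (Equiv.Perm n) : ℝ) * ‖W‖ ^ (Fintype.card n) := by
  rw [Matrix.det_apply]
  calc ‖∑ σ : Equiv.Perm n, Equiv.Perm.sign σ • ∏ i, W (σ i) i‖
      ≤ ∑ σ : Equiv.Perm n, ‖Equiv.Perm.sign σ • ∏ i, W (σ i) i‖ :=
        norm_sum_le _ _
    _ ≤ ∑ _σ : Equiv.Perm n, ‖W‖ ^ (Fintype.card n) := by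
        refine Finset.sum_le_sum fun σ _ => ?_
        have h1 : ‖Equiv.Perm.sign σ • ∏ i, W (σ i) i‖
            = ‖∏ i, W (σ i) i‖ := by
          rcases Int.units_eq_one_or (Equiv.Perm.sign σ) with h | h <;> simp [h]
        rw [h1, norm_prod]
        have h2 : ∀ i ∈ Finset.univ, ‖W (σ i) i‖ ≤ ‖W‖ := fun i _ => by
          exact Matrix.norm_entry_le_entrywise_sup_norm W
        calc (∏ i, ‖W (σ i) i‖) ≤ ∏ _i : n, ‖W‖ :=
              Finset.prod_le_prod (fun i _ => norm_nonneg _) h2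
          _ = ‖W‖ ^ (Fintype.card n) := by rw [Finset.prod_const, Finset.card_univ]
    _ = (Fintype.card (Equiv.Perm n) : ℝ) * ‖W‖ ^ (Fintype.card n) := by
        rw [Finset.sum_const, Finset.card_univ, nsmul_eq_mul]

end JWAux

open JWAux

section Main

variable {K L : ℕ}

local notation "Mat" => Matrix (Fin K ⊕ Fin L) (Fin K ⊕ Fin L) ℂ

/-- The quadratic part of `JW`. -/
noncomputable def Qf (G : Fin K → Mat) (Gz : Mat) (W : Mat) : ℝ :=
  ∑ k : Fin K, q (G k) (fun i => W i (Sum.inl k))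
    + ∑ j : Fin L, q Gz (fun i => W i (Sum.inr j))

lemma JW_eq (G : Fin K → Mat) (Gz : Mat) (W : Mat) :
    JW G Gz W = Qf G Gz W - 2 * Real.log ‖W.det‖ := by
  unfold JW Qf q
  rw [trace_eq, Complex.re_sum, Complex.re_sum]
  simp only [Matrix.submatrix_apply, id_eq]

lemma Qf_nonneg {G : Fin K → Mat} {Gz : Mat} (hG : ∀ k, (G k).PosDef) (hGz : Gz.PosDef)
    (W : Mat) : 0 ≤ Qf G Gz W :=
  add_nonneg (Finset.sum_nonneg fun k _ => q_nonneg (hG k).posSemidef _)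
    (Finset.sum_nonneg fun j _ => q_nonneg hGz.posSemidef _)

lemma Qf_pos {G : Fin K → Mat} {Gz : Mat} (hG : ∀ k, (G k).PosDef) (hGz : Gz.PosDef)
    {W : Mat} (hW : W ≠ 0) : 0 < Qf G Gz W := by
  have : ∃ i j, W i j ≠ 0 := by
    by_contra h
    push_neg at h
    exact hW (by ext i j; simpa using h i j)
  obtain ⟨i, j, hij⟩ := this
  rcases j with k | l
  · refine add_pos_of_pos_of_nonneg ?_ (Finset.sum_nonneg fun j _ => q_nonneg hGz.posSemidef _)
    refine Finset.sum_pos' (fun k _ => q_nonneg (hG k).posSemidef _) ⟨k, Finset.mem_univ _, ?_⟩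
    exact q_pos (hG k) (fun h => hij (congrFun h i))
  · refine add_pos_of_nonneg_of_pos
      (Finset.sum_nonneg fun k _ => q_nonneg (hG k).posSemidef _) ?_
    refine Finset.sum_pos' (fun j _ => q_nonneg hGz.posSemidef _) ⟨l, Finset.mem_univ _, ?_⟩
    exact q_pos hGz (fun h => hij (congrFun h i))

lemma Qf_smul (G : Fin K → Mat) (Gz : Mat) (c : ℝ) (W : Mat) :
    Qf G Gz (c • W) = c ^ 2 * Qf G Gz W := by
  unfold Qf
  have hcol : ∀ j : Fin K ⊕ Fin L, (fun i => (c • W) i j) = c • (fun i => W i j) := by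
    intro j; ext i; simp
  simp only [hcol, q_smul, Finset.mul_sum, mul_add]

lemma continuous_Qf (G : Fin K → Mat) (Gz : Mat) : Continuous (Qf G Gz) := by
  have hcol : ∀ j : Fin K ⊕ Fin L, Continuous fun W : Mat => (fun i => W i j) :=
    fun j => continuous_pi fun i => continuous_apply_apply i j
  have hq : ∀ (A : Mat) (j : Fin K ⊕ Fin L),
      Continuous fun W : Mat => q A (fun i => W i j) := fun A j =>
    Complex.continuous_re.comp
      (((hcol j).star).dotProduct (continuous_const.matrix_mulVec (hcol j)))
  exact ((continuous_finset_sum _ fun k _ => hq (G k) (Sum.inl k)).add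
    (continuous_finset_sum _ fun j _ => hq Gz (Sum.inr j)))

end Main

set_option maxHeartbeats 2000000 in
/-- If `G_1, …, G_K, G_z` are positive definite (Hermitian) `M×M` complex matrices,
then `J_W` is bounded from below on the set of invertible matrices and
attains its minimum at some invertible matrix. -/
theorem JW_bddBelow_and_attains_min (K L : ℕ) (hK : 1 ≤ K) (hL : 1 ≤ L)
    (G : Fin K → Matrix (Fin K ⊕ Fin L) (Fin K ⊕ Fin L) ℂ)
    (Gz : Matrix (Fin K ⊕ Fin L) (Fin K ⊕ Fin L) ℂ)
    (hG : ∀ k, (G k).PosDef) (hGz : Gz.PosDef) :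
    (∃ c : ℝ, ∀ W : Matrix (Fin K ⊕ Fin L) (Fin K ⊕ Fin L) ℂ,
        IsUnit W.det → c ≤ JW G Gz W) ∧
    (∃ W₀ : Matrix (Fin K ⊕ Fin L) (Fin K ⊕ Fin L) ℂ, IsUnit W₀.det ∧
        ∀ W : Matrix (Fin K ⊕ Fin L) (Fin K ⊕ Fin L) ℂ,
          IsUnit W.det → JW G Gz W₀ ≤ JW G Gz W) := by
  classical
  haveI hne : Nonempty (Fin K ⊕ Fin L) := ⟨Sum.inl ⟨0, hK⟩⟩
  set M : ℕ := Fintype.card (Fin K ⊕ Fin L) with hM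
  set C : ℝ := (Fintype.card (Equiv.Perm (Fin K ⊕ Fin L)) : ℝ) with hC
  have hC1 : (1 : ℝ) ≤ C := by
    rw [hC]
    exact_mod_cast Nat.one_le_iff_ne_zero.mpr (Fintype.card_ne_zero (α := Equiv.Perm (Fin K ⊕ Fin L)))
  -- the matrix with all entries 1 has norm 1
  have hW1 : ‖(fun _ _ => 1 : Matrix (Fin K ⊕ Fin L) (Fin K ⊕ Fin L) ℂ)‖ = 1 := by
    show ‖(fun _ => (fun _ => (1:ℂ)))‖ = 1
    rw [pi_norm_const, pi_norm_const, norm_one]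
  -- minimum of Qf on the unit sphere
  obtain ⟨U, hUS, hUmin⟩ := (isCompact_sphere (0 : Matrix (Fin K ⊕ Fin L) (Fin K ⊕ Fin L) ℂ) 1).exists_isMinOn
    ⟨(fun _ _ => 1 : Matrix (Fin K ⊕ Fin L) (Fin K ⊕ Fin L) ℂ), mem_sphere_zero_iff_norm.mpr hW1⟩
    (continuous_Qf G Gz).continuousOn
  have hU1 : ‖U‖ = 1 := by simpa [mem_sphere_iff_norm] using hUS
  set α : ℝ := Qf G Gz U with hα
  have hαpos : 0 < α := Qf_pos hG hGz (by intro h; rw [h] at hU1; simp at hU1)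
  -- coercivity of the quadratic part
  have hQlow : ∀ W : Matrix (Fin K ⊕ Fin L) (Fin K ⊕ Fin L) ℂ, α * ‖W‖ ^ 2 ≤ Qf G Gz W := by
    intro W
    by_cases hW : W = 0
    · simp [hW, Qf, q, dotProduct, Matrix.mulVec]
    · have ht : 0 < ‖W‖ := norm_pos_iff.mpr hW
      have hmemS : (‖W‖⁻¹ • W) ∈ Metric.sphere (0 : Matrix (Fin K ⊕ Fin L) (Fin K ⊕ Fin L) ℂ) 1 := by
        simp [mem_sphere_iff_norm, norm_smul, abs_of_pos (inv_pos.mpr ht),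
          inv_mul_cancel₀ ht.ne']
      have hmin2 : α ≤ Qf G Gz (‖W‖⁻¹ • W) := hUmin hmemS
      rw [Qf_smul] at hmin2
      have h3 : ‖W‖⁻¹ ^ 2 * ‖W‖ ^ 2 = 1 := by
        field_simp
      have h4 := mul_le_mul_of_nonneg_right hmin2 (sq_nonneg ‖W‖)
      nlinarith [h4, h3, Qf_nonneg hG hGz W]
  -- upper bound for log |det|
  have hdetlog : ∀ W : Matrix (Fin K ⊕ Fin L) (Fin K ⊕ Fin L) ℂ, W.det ≠ 0 →
      Real.log ‖W.det‖ ≤ Real.log C + M * ‖W‖ := by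
    intro W hdet
    have habs : 0 < ‖W.det‖ := norm_pos_iff.mpr hdet
    have hWne : W ≠ 0 := by
      intro h; rw [h] at hdet; exact hdet Matrix.det_zero
    have hWn : 0 < ‖W‖ := norm_pos_iff.mpr hWne
    have h1 : Real.log ‖W.det‖ ≤ Real.log (C * ‖W‖ ^ M) :=
      Real.log_le_log habs (abs_det_le W)
    have h2 : Real.log (C * ‖W‖ ^ M) = Real.log C + M * Real.log ‖W‖ := by
      rw [Real.log_mul (by linarith) (pow_ne_zero _ hWn.ne'), Real.log_pow]
    have h3 : Real.log ‖W‖ ≤ ‖W‖ := Real.log_le_self (norm_nonneg _)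
    have h4 : (M : ℝ) * Real.log ‖W‖ ≤ M * ‖W‖ :=
      mul_le_mul_of_nonneg_left h3 (Nat.cast_nonneg _)
    linarith
  -- global lower bound for JW
  have hJlow : ∀ W : Matrix (Fin K ⊕ Fin L) (Fin K ⊕ Fin L) ℂ, W.det ≠ 0 →
      α * ‖W‖ ^ 2 - 2 * Real.log C - 2 * M * ‖W‖ ≤ JW G Gz W := by
    intro W hdet
    rw [JW_eq]
    have := hQlow W
    have := hdetlog W hdet
    linarith
  set B : ℝ := JW G Gz 1 with hB
  set D : ℝ := B + 2 * Real.log C with hD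
  set R : ℝ := max 1 ((|D| + 2 * M) / α) with hR
  set δ : ℝ := Real.exp (-(B / 2)) with hδ
  have hδpos : 0 < δ := Real.exp_pos _
  -- membership of the sublevel set in the compact set T
  set T : Set (Matrix (Fin K ⊕ Fin L) (Fin K ⊕ Fin L) ℂ) := {W | ‖W‖ ≤ R} ∩ {W | δ ≤ ‖W.det‖} with hT
  have hmem : ∀ W : Matrix (Fin K ⊕ Fin L) (Fin K ⊕ Fin L) ℂ, W.det ≠ 0 → JW G Gz W ≤ B → W ∈ T := by
    intro W hdet hle
    constructor
    · show ‖W‖ ≤ R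
      have h1 := hJlow W hdet
      set t := ‖W‖ with htdef
      have ht0 : 0 ≤ t := norm_nonneg _
      rcases le_or_gt t 1 with h | h
      · exact h.trans (le_max_left _ _)
      · refine le_trans ?_ (le_max_right _ _)
        rw [le_div_iff₀ hαpos]
        nlinarith [le_abs_self D, abs_nonneg D, Nat.cast_nonneg (α := ℝ) M]
    · show δ ≤ ‖W.det‖
      have habs : 0 < ‖W.det‖ := norm_pos_iff.mpr hdet
      have h1 : -(B / 2) ≤ Real.log ‖W.det‖ := by
        have h2 := JW_eq G Gz W
        have h3 := Qf_nonneg hG hGz W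
        have : JW G Gz W = Qf G Gz W - 2 * Real.log ‖W.det‖ := h2
        linarith
      calc δ = Real.exp (-(B / 2)) := rfl
        _ ≤ Real.exp (Real.log ‖W.det‖) := Real.exp_le_exp.mpr h1
        _ = ‖W.det‖ := Real.exp_log habs
  have habsdet_cont : Continuous fun W : Matrix (Fin K ⊕ Fin L) (Fin K ⊕ Fin L) ℂ => ‖W.det‖ :=
    continuous_norm.comp (continuous_id.matrix_det)
  have hTclosed : IsClosed T :=
    (isClosed_le continuous_norm continuous_const).inter
      (isClosed_le continuous_const habsdet_cont)
  have hTbdd : Bornology.IsBounded T := by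
    refine (Metric.isBounded_closedBall (x := (0 : Matrix (Fin K ⊕ Fin L) (Fin K ⊕ Fin L) ℂ)) (r := R)).subset ?_
    intro W hW
    exact Metric.mem_closedBall.mpr (by simpa [dist_zero_right] using hW.1)
  have hTcompact : IsCompact T := Metric.isCompact_of_isClosed_isBounded hTclosed hTbdd
  have h1T : (1 : Matrix (Fin K ⊕ Fin L) (Fin K ⊕ Fin L) ℂ) ∈ T :=
    hmem 1 (by simp) le_rfl
  have hcont : ContinuousOn (JW G Gz) T := by
    intro W hW
    apply ContinuousAt.continuousWithinAt
    have hrw : JW G Gz = fun W => Qf G Gz W - 2 * Real.log ‖W.det‖ :=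
      funext (JW_eq G Gz)
    rw [hrw]
    have habs : ‖W.det‖ ≠ 0 := (lt_of_lt_of_le hδpos hW.2).ne'
    exact ((continuous_Qf G Gz).continuousAt).sub
      (continuousAt_const.mul (habsdet_cont.continuousAt.log habs))
  obtain ⟨W₀, hW₀T, hW₀min⟩ := hTcompact.exists_isMinOn ⟨1, h1T⟩ hcont
  have hW₀det : W₀.det ≠ 0 := by
    intro h
    have h2 : δ ≤ ‖W₀.det‖ := hW₀T.2
    rw [h] at h2
    simp at h2
    linarith
  have hfinal : ∀ W : Matrix (Fin K ⊕ Fin L) (Fin K ⊕ Fin L) ℂ, IsUnit W.det → JW G Gz W₀ ≤ JW G Gz W := by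
    intro W hWu
    have hdet : W.det ≠ 0 := hWu.ne_zero
    by_cases h : JW G Gz W ≤ B
    · exact hW₀min (hmem W hdet h)
    · have h1 : JW G Gz W₀ ≤ B := hW₀min h1T
      linarith
  exact ⟨⟨JW G Gz W₀, hfinal⟩, ⟨W₀, isUnit_iff_ne_zero.mpr hW₀det, hfinal⟩⟩
end

section
/- Suppose G_z is a positive definite Hermitian M×M complex matrix, and let W⁰ = [W_s, W_z⁰] be an invertible M×M complex matrix with W_s ∈ ℂ^{M×K} its first K columns. Define U_z = ((W⁰)^H G_z)^{−1} E_z ∈ ℂ^{M×(M−K)}. Then U_z^H G_z U_z is positive definite, and a matrix W_z ∈ ℂ^{M×(M−K)} satisfies the stationary condition [W_s, W_z]^H G_z W_z = E_z if and only if there exists a unitary matrix Q ∈ ℂ^{(M−K)×(M−K)} such that W_z = U_z (U_z^H G_z U_z)^{−1/2} Q. -/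
open Matrix
open scoped ComplexOrder

/-- `E_z = [e_{K+1}, …, e_M]`. -/
def Ez (K L : ℕ) : Matrix (Fin K ⊕ Fin L) (Fin L) ℂ :=
  Matrix.of fun i j => if i = Sum.inr j then 1 else 0

/-- `E_s = [e_1, …, e_K]`. -/
def EsM (K L : ℕ) : Matrix (Fin K ⊕ Fin L) (Fin K) ℂ :=
  Matrix.of fun i j => if i = Sum.inl j then 1 else 0

lemma Ez_eq (K L : ℕ) : Ez K L = Matrix.fromRows (0 : Matrix (Fin K) (Fin L) ℂ) 1 := by
  ext i j
  cases i with
  | inl i => simp [Ez, Matrix.fromRows_apply_inl]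
  | inr i => simp [Ez, Matrix.fromRows_apply_inr, Matrix.one_apply, eq_comm]

lemma EsM_eq (K L : ℕ) : EsM K L = Matrix.fromRows (1 : Matrix (Fin K) (Fin K) ℂ) 0 := by
  ext i j
  cases i with
  | inl i => simp [EsM, Matrix.fromRows_apply_inl, Matrix.one_apply, eq_comm]
  | inr i => simp [EsM, Matrix.fromRows_apply_inr]

lemma EsM_mul_conjT_add (K L : ℕ) :
    EsM K L * (EsM K L)ᴴ + Ez K L * (Ez K L)ᴴ = 1 := by
  rw [Ez_eq, EsM_eq, Matrix.conjTranspose_fromRows_eq_fromCols_conjTranspose,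
    Matrix.conjTranspose_fromRows_eq_fromCols_conjTranspose,
    Matrix.fromRows_mul_fromCols, Matrix.fromRows_mul_fromCols]
  simp [← Matrix.fromBlocks_one, Matrix.fromBlocks_add]

set_option maxHeartbeats 1000000 in
/-- Given `U_z = ((W⁰)ᴴ G_z)⁻¹ E_z`, the matrix `U_zᴴ G_z U_z` is positive definite,
and `W_z` satisfies the stationary condition `[W_s, W_z]ᴴ G_z W_z = E_z`
iff `W_z = U_z (U_zᴴ G_z U_z)^{−1/2} Q` for some unitary `Q`. -/
theorem stationary_Wz_iff (K L : ℕ) (hK : 1 ≤ K) (hL : 1 ≤ L)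
    (Gz : Matrix (Fin K ⊕ Fin L) (Fin K ⊕ Fin L) ℂ) (hGz : Gz.PosDef)
    (W0 : Matrix (Fin K ⊕ Fin L) (Fin K ⊕ Fin L) ℂ) (hW0 : IsUnit W0.det)
    (Ws : Matrix (Fin K ⊕ Fin L) (Fin K) ℂ) (hWs : Ws = W0.submatrix id Sum.inl)
    (Uz : Matrix (Fin K ⊕ Fin L) (Fin L) ℂ) (hUz : Uz = (W0ᴴ * Gz)⁻¹ * Ez K L) :
    (Uzᴴ * Gz * Uz).PosDef ∧
    ∀ S : Matrix (Fin L) (Fin L) ℂ, S.PosDef → S * S = Uzᴴ * Gz * Uz →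
      ∀ Wz : Matrix (Fin K ⊕ Fin L) (Fin L) ℂ,
        ((Matrix.fromCols Ws Wz)ᴴ * Gz * Wz = Ez K L ↔
          ∃ Q : Matrix (Fin L) (Fin L) ℂ,
            Qᴴ * Q = 1 ∧ Q * Qᴴ = 1 ∧ Wz = Uz * S⁻¹ * Q) := by
  set A := W0ᴴ * Gz with hA
  have hAdet : IsUnit A.det := by
    rw [hA, Matrix.det_mul, Matrix.det_conjTranspose]
    exact (hW0.star).mul hGz.det_pos.ne'.isUnit
  have hAU : A * Uz = Ez K L := by
    rw [hUz, ← Matrix.mul_assoc, Matrix.mul_nonsing_inv _ hAdet, Matrix.one_mul]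
  -- Ws = W0 * EsM
  have hWsE : Ws = W0 * EsM K L := by
    rw [hWs]; ext i j
    simp [Matrix.mul_apply, EsM, Finset.sum_ite_eq']
  have hWsGzUz : Wsᴴ * Gz * Uz = 0 := by
    rw [hWsE, Matrix.conjTranspose_mul, Matrix.mul_assoc, Matrix.mul_assoc, ← Matrix.mul_assoc W0ᴴ,
      ← hA, hAU]
    rw [EsM_eq, Ez_eq, Matrix.conjTranspose_fromRows_eq_fromCols_conjTranspose,
      Matrix.fromCols_mul_fromRows]
    simp
  -- injectivity of mulVec by Uz
  have hUzinj : ∀ x : Fin L → ℂ, x ≠ 0 → Uz *ᵥ x ≠ 0 := by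
    intro x hx h0
    have h1 : A *ᵥ (Uz *ᵥ x) = Ez K L *ᵥ x := by
      rw [Matrix.mulVec_mulVec, hAU]
    rw [h0, Matrix.mulVec_zero] at h1
    have h2 : ∀ j, x j = 0 := by
      intro j
      have := congrFun h1.symm (Sum.inr j)
      simpa [Ez_eq, Matrix.fromRows_mulVec] using this
    exact hx (funext h2)
  have hPD : (Uzᴴ * Gz * Uz).PosDef := by
    refine Matrix.PosDef.of_dotProduct_mulVec_pos ?_ ?_
    · have : (Uzᴴ * Gz * Uz)ᴴ = Uzᴴ * Gzᴴ * Uz := by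
        simp [Matrix.conjTranspose_mul, Matrix.mul_assoc]
      rw [Matrix.IsHermitian, this, hGz.isHermitian.eq]
    · intro x hx
      have := hGz.dotProduct_mulVec_pos (hUzinj x hx)
      simpa only [star_mulVec, Matrix.dotProduct_mulVec, Matrix.vecMul_vecMul] using this
  refine ⟨hPD, ?_⟩
  intro S hS hSS Wz
  have hSdet : IsUnit S.det := hS.det_pos.ne'.isUnit
  -- reformulate the stationary condition as two block equations
  have hsplit : ((Matrix.fromCols Ws Wz)ᴴ * Gz * Wz = Ez K L) ↔
      (Wsᴴ * Gz * Wz = 0 ∧ Wzᴴ * Gz * Wz = 1) := by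
    rw [Matrix.conjTranspose_fromCols_eq_fromRows_conjTranspose, Ez_eq,
      Matrix.fromRows_mul, Matrix.fromRows_mul, Matrix.fromRows_ext_iff]
  rw [hsplit]
  constructor
  · rintro ⟨h1, h2⟩
    set C := (Ez K L)ᴴ * (A * Wz) with hC
    have hAWz : A * Wz = Ez K L * C := by
      have hE : (EsM K L)ᴴ * (A * Wz) = 0 := by
        rw [hA, Matrix.mul_assoc, ← Matrix.mul_assoc (EsM K L)ᴴ W0ᴴ, ← Matrix.conjTranspose_mul,
          ← hWsE, ← Matrix.mul_assoc, h1]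
      calc A * Wz = 1 * (A * Wz) := (Matrix.one_mul _).symm
        _ = EsM K L * ((EsM K L)ᴴ * (A * Wz)) + Ez K L * C := by
            rw [← EsM_mul_conjT_add, Matrix.add_mul, Matrix.mul_assoc, Matrix.mul_assoc, hC]
            simp [hA, Matrix.mul_assoc]
        _ = Ez K L * C := by rw [hE, Matrix.mul_zero, zero_add]
    have hWzU : Wz = Uz * C := by
      have := congrArg (fun X => A⁻¹ * X) hAWz
      simpa [← Matrix.mul_assoc, Matrix.nonsing_inv_mul _ hAdet, hUz] using this
    have hCC : Cᴴ * (S * S) * C = 1 := by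
      rw [hSS]
      calc Cᴴ * (Uzᴴ * Gz * Uz) * C = (Uz * C)ᴴ * Gz * (Uz * C) := by
            simp [Matrix.conjTranspose_mul, Matrix.mul_assoc]
        _ = 1 := by rw [← hWzU, h2]
    refine ⟨S * C, ?_, ?_, ?_⟩
    · calc (S * C)ᴴ * (S * C) = Cᴴ * (Sᴴ * S) * C := by
            simp [Matrix.conjTranspose_mul, Matrix.mul_assoc]
      _ = 1 := by rw [hS.isHermitian.eq, hCC]
    · rw [← mul_eq_one_comm]
      calc (S * C)ᴴ * (S * C) = Cᴴ * (Sᴴ * S) * C := by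
            simp [Matrix.conjTranspose_mul, Matrix.mul_assoc]
      _ = 1 := by rw [hS.isHermitian.eq, hCC]
    · rw [hWzU, Matrix.mul_assoc, ← Matrix.mul_assoc S⁻¹, Matrix.nonsing_inv_mul _ hSdet,
        Matrix.one_mul]
  · rintro ⟨Q, hQ1, _, rfl⟩
    constructor
    · rw [show Wsᴴ * Gz * (Uz * S⁻¹ * Q) = (Wsᴴ * Gz * Uz) * (S⁻¹ * Q) by
        simp [Matrix.mul_assoc], hWsGzUz, Matrix.zero_mul]
    · have hSinv : (S⁻¹)ᴴ = S⁻¹ := by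
        rw [Matrix.conjTranspose_nonsing_inv, hS.isHermitian.eq]
      calc (Uz * S⁻¹ * Q)ᴴ * Gz * (Uz * S⁻¹ * Q)
          = Qᴴ * ((S⁻¹)ᴴ * ((Uzᴴ * Gz * Uz) * (S⁻¹ * Q))) := by
            simp [Matrix.conjTranspose_mul, Matrix.mul_assoc]
        _ = Qᴴ * (S⁻¹ * (S * S * (S⁻¹ * Q))) := by rw [hSinv, hSS]
        _ = Qᴴ * Q := by
            rw [show S⁻¹ * (S * S * (S⁻¹ * Q)) = (S⁻¹ * S) * ((S * S⁻¹) * Q) by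
              simp [Matrix.mul_assoc], Matrix.nonsing_inv_mul _ hSdet,
              Matrix.mul_nonsing_inv _ hSdet, Matrix.one_mul, Matrix.one_mul]
        _ = 1 := hQ1
end

section
/- Suppose G_1, …, G_K and G_z are positive definite Hermitian M×M complex matrices, and let W⁰ = [W_s, W_z⁰] be an invertible M×M complex matrix with W_s ∈ ℂ^{M×K} its first K columns. Define U_z = ((W⁰)^H G_z)^{−1} E_z. Then for every unitary matrix Q ∈ ℂ^{(M−K)×(M−K)}, the matrix W_z* = U_z (U_z^H G_z U_z)^{−1/2} Q makes [W_s, W_z*] invertible and globally minimizes the function W_z ↦ J_W([W_s, W_z]) over all W_z ∈ ℂ^{M×(M−K)} such that [W_s, W_z] is invertible. -/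
/- STATEMENT 3.
M×M complex matrices are encoded as matrices indexed by `Fin K ⊕ Fin L`,
where `M = K + L`, `K ≥ 1`, `L = M - K ≥ 1`. The first `K` columns (`Sum.inl`)
form `W_s`; the last `L` columns (`Sum.inr`) form `W_z`; `[W_s, W_z]` is
`Matrix.fromColumns W_s W_z`. For a positive definite Hermitian `B`, `B^{−1/2}`
is represented as `S⁻¹` where `S` is the unique positive definite matrix with
`S * S = B` (the statement is quantified over all such `S`). -/

open Matrix
open scoped ComplexOrder

-- trace of PosSemidef has nonneg real part
lemma myTraceNonneg {n : Type*} [Fintype n] [DecidableEq n] {A : Matrix n n ℂ}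
    (hA : A.PosSemidef) : 0 ≤ (Matrix.trace A).re := by
  rw [Matrix.trace]
  simp only [Complex.re_sum, Matrix.diag_apply]
  refine Finset.sum_nonneg fun i _ => ?_
  have h := hA.re_dotProduct_nonneg (Pi.single i 1)
  simpa [Matrix.mulVec_single, dotProduct, Pi.single_apply, mul_ite, ite_mul,
    Finset.sum_ite_eq'] using h

-- trace of Hermitian = sum of eigenvalues (real part)
lemma myTraceEig {n : Type*} [Fintype n] [DecidableEq n] {A : Matrix n n ℂ}
    (hA : A.IsHermitian) : (Matrix.trace A).re = ∑ i, hA.eigenvalues i := by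
  rw [hA.trace_eq_sum_eigenvalues]
  simp [Matrix.trace_diagonal, Complex.re_sum]

-- core scalar inequality
lemma myCore {n : Type*} [Fintype n] [DecidableEq n] (P : Matrix n n ℂ)
    (hP : P.det ≠ 0) :
    (Fintype.card n : ℝ) + 2 * Real.log (‖P.det‖) ≤
      (Matrix.trace (Pᴴ * P)).re := by
  have hps : (Pᴴ * P).PosSemidef := Matrix.posSemidef_conjTranspose_mul_self P
  have hherm := hps.isHermitian
  set lam := hherm.eigenvalues with hlam
  have hdet : ((Complex.normSq P.det : ℝ) : ℂ) = ((∏ i, lam i : ℝ) : ℂ) := by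
    rw [Complex.normSq_eq_conj_mul_self]
    rw [show (starRingEnd ℂ) P.det = Pᴴ.det by rw [Matrix.det_conjTranspose]; rfl]
    rw [← Matrix.det_mul, hherm.det_eq_prod_eigenvalues]
    push_cast
    rfl
  have hdet' : Complex.normSq P.det = ∏ i, lam i := by exact_mod_cast hdet
  have hprod_ne : (∏ i, lam i) ≠ 0 := by
    rw [← hdet']; simpa [Complex.normSq_eq_zero] using hP
  have hpos : ∀ i, 0 < lam i := by
    intro i
    rcases lt_or_eq_of_le (hps.eigenvalues_nonneg i) with h | h
    · exact h
    · exact absurd (Finset.prod_eq_zero (Finset.mem_univ i) h.symm) hprod_ne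
  have hlog : 2 * Real.log (‖P.det‖) = ∑ i, Real.log (lam i) := by
    have h1 : ‖P.det‖ ^ 2 = ∏ i, lam i := by
      rw [Complex.sq_norm]; exact hdet'
    have h2 : Real.log (‖P.det‖ ^ 2) = ∑ i, Real.log (lam i) := by
      rw [h1, Real.log_prod fun i _ => (hpos i).ne']
    rw [← h2, Real.log_pow]; push_cast; ring
  rw [myTraceEig hherm, hlog]
  have hcard : (Fintype.card n : ℝ) = ∑ _i : n, (1 : ℝ) := by simp
  rw [hcard, ← Finset.sum_add_distrib]
  refine Finset.sum_le_sum fun i _ => ?_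
  have := Real.log_le_sub_one_of_pos (hpos i)
  linarith

-- Ezᴴ * M picks the bottom rows
lemma myEzH {K L : ℕ} {n : Type*} [Fintype n] (M : Matrix (Fin K ⊕ Fin L) n ℂ) :
    (Ez K L)ᴴ * M = M.submatrix Sum.inr id := by
  ext j c
  simp [Matrix.mul_apply, Ez, Matrix.conjTranspose_apply, apply_ite, ite_mul,
    Finset.sum_ite_eq]

lemma mySubMul {K L : ℕ} (A B : Matrix (Fin K ⊕ Fin L) (Fin K ⊕ Fin L) ℂ) :
    A * B.submatrix id Sum.inl = (A * B).submatrix id Sum.inl := by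
  ext i j; simp [Matrix.mul_apply]

-- determinant factorization
lemma myDetFact {K L : ℕ} (W0 : Matrix (Fin K ⊕ Fin L) (Fin K ⊕ Fin L) ℂ)
    (hW0 : IsUnit W0.det) (Wz : Matrix (Fin K ⊕ Fin L) (Fin L) ℂ) :
    (Matrix.fromCols (W0.submatrix id Sum.inl) Wz).det
      = W0.det * ((W0⁻¹ * Wz).submatrix Sum.inr id).det := by
  set X := W0⁻¹ * Wz with hX
  have hB : W0⁻¹ * Matrix.fromCols (W0.submatrix id Sum.inl) Wz =
      Matrix.fromBlocks 1 (X.submatrix Sum.inl id) 0 (X.submatrix Sum.inr id) := by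
    rw [Matrix.mul_fromCols, mySubMul, Matrix.nonsing_inv_mul _ hW0]
    ext i j
    cases i with
    | inl i =>
      cases j with
      | inl j => simp [Matrix.one_apply, Matrix.fromCols_apply_inl,
          Matrix.fromBlocks_apply₁₁]
      | inr j => simp [Matrix.fromCols_apply_inr, Matrix.fromBlocks_apply₁₂, hX]
    | inr i =>
      cases j with
      | inl j => simp [Matrix.one_apply, Matrix.fromCols_apply_inl,
          Matrix.fromBlocks_apply₂₁]
      | inr j => simp [Matrix.fromCols_apply_inr, Matrix.fromBlocks_apply₂₂, hX]
  have h2 : Matrix.fromCols (W0.submatrix id Sum.inl) Wz =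
      W0 * Matrix.fromBlocks 1 (X.submatrix Sum.inl id) 0 (X.submatrix Sum.inr id) := by
    rw [← hB, ← Matrix.mul_assoc, Matrix.mul_nonsing_inv _ hW0, one_mul]
  rw [h2, Matrix.det_mul, Matrix.det_fromBlocks_zero₂₁, Matrix.det_one, one_mul]
/-- With `U_z = ((W⁰)ᴴ G_z)⁻¹ E_z`, for every unitary `Q` the matrix
`W_z* = U_z (U_zᴴ G_z U_z)^{−1/2} Q` makes `[W_s, W_z*]` invertible and globally
minimizes `W_z ↦ J_W([W_s, W_z])` over all `W_z` with `[W_s, W_z]` invertible. -/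
theorem update_Wz_global_min (K L : ℕ) (hK : 1 ≤ K) (hL : 1 ≤ L)
    (G : Fin K → Matrix (Fin K ⊕ Fin L) (Fin K ⊕ Fin L) ℂ)
    (Gz : Matrix (Fin K ⊕ Fin L) (Fin K ⊕ Fin L) ℂ)
    (hG : ∀ k, (G k).PosDef) (hGz : Gz.PosDef)
    (W0 : Matrix (Fin K ⊕ Fin L) (Fin K ⊕ Fin L) ℂ) (hW0 : IsUnit W0.det)
    (Ws : Matrix (Fin K ⊕ Fin L) (Fin K) ℂ) (hWs : Ws = W0.submatrix id Sum.inl)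
    (Uz : Matrix (Fin K ⊕ Fin L) (Fin L) ℂ) (hUz : Uz = (W0ᴴ * Gz)⁻¹ * Ez K L) :
    ∀ S : Matrix (Fin L) (Fin L) ℂ, S.PosDef → S * S = Uzᴴ * Gz * Uz →
      ∀ Q : Matrix (Fin L) (Fin L) ℂ, Qᴴ * Q = 1 → Q * Qᴴ = 1 →
        IsUnit (Matrix.fromCols Ws (Uz * S⁻¹ * Q)).det ∧
        ∀ Wz : Matrix (Fin K ⊕ Fin L) (Fin L) ℂ,
          IsUnit (Matrix.fromCols Ws Wz).det →
            JW G Gz (Matrix.fromCols Ws (Uz * S⁻¹ * Q)) ≤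
              JW G Gz (Matrix.fromCols Ws Wz) := by
  intro S hS hSS Q hQ1 hQ2
  have hGzH : Gzᴴ = Gz := hGz.isHermitian
  have hGzdet : IsUnit Gz.det := hGz.det_pos.ne'.isUnit
  have hSdet : IsUnit S.det := hS.det_pos.ne'.isUnit
  have hSH : Sᴴ = S := hS.isHermitian
  have hSiH : (S⁻¹)ᴴ = S⁻¹ := by rw [Matrix.conjTranspose_nonsing_inv, hSH]
  have hSSi : S * S⁻¹ = 1 := Matrix.mul_nonsing_inv _ hSdet
  have hSiS : S⁻¹ * S = 1 := Matrix.nonsing_inv_mul _ hSdet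
  -- Uzᴴ * Gz = Ezᴴ * W0⁻¹
  have hUG : Uzᴴ * Gz = (Ez K L)ᴴ * W0⁻¹ := by
    rw [hUz, Matrix.conjTranspose_mul, Matrix.conjTranspose_nonsing_inv,
      Matrix.conjTranspose_mul, Matrix.conjTranspose_conjTranspose, hGzH,
      Matrix.mul_inv_rev, Matrix.mul_assoc, Matrix.mul_assoc,
      Matrix.nonsing_inv_mul _ hGzdet, Matrix.mul_one]
  -- determinant factorization in terms of N Wz := Uzᴴ * Gz * Wz
  have hdetN : ∀ Wz : Matrix (Fin K ⊕ Fin L) (Fin L) ℂ,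
      (Matrix.fromCols Ws Wz).det = W0.det * (Uzᴴ * Gz * Wz).det := by
    intro Wz
    rw [hWs, myDetFact W0 hW0 Wz, hUG, Matrix.mul_assoc, myEzH]
  -- computation of N at the candidate
  have hNstar : Uzᴴ * Gz * (Uz * S⁻¹ * Q) = S * Q := by
    calc Uzᴴ * Gz * (Uz * S⁻¹ * Q) = Uzᴴ * Gz * Uz * S⁻¹ * Q := by
          simp only [Matrix.mul_assoc]
      _ = S * S * S⁻¹ * Q := by rw [← hSS]
      _ = S * (S * S⁻¹) * Q := by simp only [Matrix.mul_assoc]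
      _ = S * Q := by rw [hSSi, Matrix.mul_one]
  -- the candidate is invertible
  have hQdet : IsUnit Q.det := by
    refine IsUnit.of_mul_eq_one Qᴴ.det ?_
    rw [← Matrix.det_mul, hQ2, Matrix.det_one]
  have hcanddet : IsUnit (Matrix.fromCols Ws (Uz * S⁻¹ * Q)).det := by
    rw [hdetN, hNstar, Matrix.det_mul]
    exact (hW0.mul (hSdet.mul hQdet))
  refine ⟨hcanddet, ?_⟩
  intro Wz hinv
  -- abbreviations
  set N : Matrix (Fin L) (Fin L) ℂ := Uzᴴ * Gz * Wz with hN
  have hFdet : (Matrix.fromCols Ws Wz).det = W0.det * N.det := hdetN Wz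
  have hF0 : (Matrix.fromCols Ws Wz).det ≠ 0 := hinv.ne_zero
  have hW00 : W0.det ≠ 0 := hW0.ne_zero
  have hN0 : N.det ≠ 0 := by
    intro h; rw [hFdet, h, mul_zero] at hF0; exact hF0 rfl
  have hS0 : S.det ≠ 0 := hSdet.ne_zero
  have hQ0 : Q.det ≠ 0 := hQdet.ne_zero
  set P : Matrix (Fin L) (Fin L) ℂ := S⁻¹ * N with hP
  have hSP : S * P = N := by
    rw [hP, ← Matrix.mul_assoc, hSSi, one_mul]
  have hdetNP : N.det = S.det * P.det := by rw [← hSP, Matrix.det_mul]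
  have hP0 : P.det ≠ 0 := by
    intro h
    rw [hdetNP, h, mul_zero] at hN0
    exact hN0 rfl
  -- trace decomposition for arbitrary Wz
  set R : Matrix (Fin K ⊕ Fin L) (Fin L) ℂ := Uz * (S⁻¹ * P) with hR
  have hRH : Rᴴ = Pᴴ * (S⁻¹ * Uzᴴ) := by
    rw [hR, Matrix.conjTranspose_mul, Matrix.conjTranspose_mul, hSiH, Matrix.mul_assoc]
  have hUGW : Uzᴴ * (Gz * Wz) = S * P := by
    rw [← Matrix.mul_assoc, ← hN, hSP]
  have hUGU : Uzᴴ * (Gz * Uz) = S * S := by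
    rw [← Matrix.mul_assoc, ← hSS]
  have hRGW : Rᴴ * Gz * Wz = Pᴴ * P := by
    rw [hRH]
    calc Pᴴ * (S⁻¹ * Uzᴴ) * Gz * Wz = Pᴴ * (S⁻¹ * (Uzᴴ * (Gz * Wz))) := by
          simp only [Matrix.mul_assoc]
      _ = Pᴴ * (S⁻¹ * (S * P)) := by rw [hUGW]
      _ = Pᴴ * ((S⁻¹ * S) * P) := by simp only [Matrix.mul_assoc]
      _ = Pᴴ * P := by rw [hSiS, one_mul]
  have hWGR : Wzᴴ * Gz * R = Pᴴ * P := by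
    have := congrArg Matrix.conjTranspose hRGW
    rw [Matrix.conjTranspose_mul, Matrix.conjTranspose_mul, hGzH,
      Matrix.conjTranspose_conjTranspose] at this
    calc Wzᴴ * Gz * R = Wzᴴ * (Gz * R) := by rw [Matrix.mul_assoc]
      _ = (Pᴴ * P)ᴴ := by rw [← this]
      _ = Pᴴ * P := by
          rw [Matrix.conjTranspose_mul, Matrix.conjTranspose_conjTranspose]
  have hRGR : Rᴴ * Gz * R = Pᴴ * P := by
    rw [hRH]
    calc Pᴴ * (S⁻¹ * Uzᴴ) * Gz * R = Pᴴ * (S⁻¹ * (Uzᴴ * (Gz * (Uz * (S⁻¹ * P))))) := by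
          simp only [Matrix.mul_assoc, hR]
      _ = Pᴴ * (S⁻¹ * (Uzᴴ * (Gz * Uz) * (S⁻¹ * P))) := by
          simp only [Matrix.mul_assoc]
      _ = Pᴴ * (S⁻¹ * (S * S * (S⁻¹ * P))) := by rw [hUGU]
      _ = Pᴴ * ((S⁻¹ * S) * (S * S⁻¹) * P) := by simp only [Matrix.mul_assoc]
      _ = Pᴴ * P := by rw [hSiS, hSSi, one_mul, one_mul]
  have hexpand : Wzᴴ * Gz * Wz = (Wz - R)ᴴ * Gz * (Wz - R) + Pᴴ * P := by
    simp only [Matrix.conjTranspose_sub, Matrix.sub_mul, Matrix.mul_sub]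
    rw [hRGW, hWGR, hRGR]
    abel
  -- trace inequality
  have htr1 : 0 ≤ (Matrix.trace ((Wz - R)ᴴ * Gz * (Wz - R))).re :=
    myTraceNonneg (hGz.posSemidef.conjTranspose_mul_mul_same (Wz - R))
  have htr : (Matrix.trace (Pᴴ * P)).re ≤ (Matrix.trace (Wzᴴ * Gz * Wz)).re := by
    rw [hexpand, Matrix.trace_add, Complex.add_re]
    linarith
  -- core inequality
  have hcore := myCore P hP0
  rw [Fintype.card_fin] at hcore
  -- log computations
  have habsS : ‖S.det‖ ≠ 0 := by simpa using hS0
  have habsN : ‖N.det‖ ≠ 0 := by simpa using hN0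
  have habsW0 : ‖W0.det‖ ≠ 0 := by simpa using hW00
  have habsP : ‖P.det‖ ≠ 0 := by simpa using hP0
  have hlogP : Real.log (‖P.det‖) =
      Real.log (‖N.det‖) - Real.log (‖S.det‖) := by
    rw [hdetNP, norm_mul, Real.log_mul habsS habsP]
    ring
  have habsQ : ‖Q.det‖ = 1 := by
    have h1 : ‖Qᴴ.det‖ * ‖Q.det‖ = 1 := by
      rw [← norm_mul, ← Matrix.det_mul, hQ1, Matrix.det_one, norm_one]
    rw [Matrix.det_conjTranspose] at h1
    have h2 : ‖star Q.det‖ = ‖Q.det‖ := by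
      simpa using Complex.norm_conj Q.det
    rw [h2] at h1
    rcases mul_self_eq_one_iff.mp h1 with h | h
    · exact h
    · have h3 := norm_nonneg Q.det
      rw [h] at h3
      linarith
  -- values of JW
  have hsubmatrix : ∀ Wz' : Matrix (Fin K ⊕ Fin L) (Fin L) ℂ,
      (Matrix.fromCols Ws Wz').submatrix id Sum.inr = Wz' := by
    intro Wz'; ext i j; simp [Matrix.submatrix_apply, Matrix.fromCols_apply_inr]
  have hcol : ∀ (Wz' : Matrix (Fin K ⊕ Fin L) (Fin L) ℂ) (k : Fin K),
      (fun i => Matrix.fromCols Ws Wz' i (Sum.inl k)) = fun i => Ws i k := by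
    intro Wz' k; funext i; simp [Matrix.fromCols_apply_inl]
  have hJW : ∀ Wz' : Matrix (Fin K ⊕ Fin L) (Fin L) ℂ,
      JW G Gz (Matrix.fromCols Ws Wz') =
        (∑ k : Fin K,
          (star (fun i => Ws i k) ⬝ᵥ ((G k) *ᵥ (fun i => Ws i k)))).re
        + (Matrix.trace (Wz'ᴴ * Gz * Wz')).re
        - 2 * Real.log (‖(Matrix.fromCols Ws Wz').det‖) := by
    intro Wz'
    rw [JW, hsubmatrix Wz']
    simp only [hcol Wz']
  -- candidate trace value
  have hcandH : (Uz * S⁻¹ * Q)ᴴ * Gz * (Uz * S⁻¹ * Q) = 1 := by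
    have e1 : (Uz * S⁻¹ * Q)ᴴ = Qᴴ * (S⁻¹ * Uzᴴ) := by
      rw [Matrix.conjTranspose_mul, Matrix.conjTranspose_mul, hSiH]
    rw [e1]
    calc Qᴴ * (S⁻¹ * Uzᴴ) * Gz * (Uz * S⁻¹ * Q)
        = Qᴴ * (S⁻¹ * (Uzᴴ * (Gz * Uz) * (S⁻¹ * Q))) := by simp only [Matrix.mul_assoc]
      _ = Qᴴ * (S⁻¹ * (S * S * (S⁻¹ * Q))) := by rw [hUGU]
      _ = Qᴴ * ((S⁻¹ * S) * (S * S⁻¹) * Q) := by simp only [Matrix.mul_assoc]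
      _ = Qᴴ * Q := by rw [hSiS, hSSi, one_mul, one_mul]
      _ = 1 := hQ1
  -- candidate det abs
  have hcanddetval : ‖(Matrix.fromCols Ws (Uz * S⁻¹ * Q)).det‖ =
      ‖W0.det‖ * ‖S.det‖ := by
    rw [hdetN, hNstar, Matrix.det_mul, norm_mul, norm_mul, habsQ, mul_one]
  -- finish
  rw [hJW, hJW]
  have hlogF : Real.log (‖(Matrix.fromCols Ws Wz).det‖) =
      Real.log (‖W0.det‖) + Real.log (‖N.det‖) := by
    rw [hFdet, norm_mul, Real.log_mul habsW0 habsN]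
  have hlogC : Real.log (‖(Matrix.fromCols Ws (Uz * S⁻¹ * Q)).det‖) =
      Real.log (‖W0.det‖) + Real.log (‖S.det‖) := by
    rw [hcanddetval, Real.log_mul habsW0 habsS]
  have hcandtr : (Matrix.trace ((Uz * S⁻¹ * Q)ᴴ * Gz * (Uz * S⁻¹ * Q))).re = (L : ℝ) := by
    rw [hcandH, Matrix.trace_one]
    simp
  rw [hlogF, hlogC, hcandtr]
  have htotal : (L : ℝ) + 2 * Real.log (‖P.det‖) ≤
      (Matrix.trace (Wzᴴ * Gz * Wz)).re := le_trans hcore htr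
  rw [hlogP] at htotal
  linarith
end

section
/- Let K = 1 and M ≥ 2, and suppose G_1 and G_z are positive definite Hermitian M×M complex matrices. Let u_1 ∈ ℂ^M be nonzero with G_z u_1 = λ G_1 u_1 for some real λ, and let U_z ∈ ℂ^{M×(M−1)} satisfy U_z^H G_z u_1 = 0 with U = [u_1, U_z] invertible. Set w_1 = u_1 (u_1^H G_1 u_1)^{−1/2}, W_z = U_z (U_z^H G_z U_z)^{−1/2}, and W = [w_1, W_z]. Then λ > 0 and |det W| = √λ · (det G_z)^{−1/2}, where det G_z is a positive real number. -/
/- STATEMENT 8 (K = 1).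
M×M complex matrices (M = 1 + L ≥ 2) are encoded as matrices indexed by
`Fin 1 ⊕ Fin L`. `W = [w_1, W_z]` is built with `Matrix.fromColumns`. For a
positive definite Hermitian `B`, `B^{−1/2}` is `S⁻¹` where `S` is the unique
positive definite matrix with `S * S = B` (quantified over all such `S`); for
the positive real `u_1ᴴ G_1 u_1`, its `−1/2` power is `(Real.sqrt (·).re)⁻¹`.
"det G_z is a positive real number" is expressed via `d : ℝ`, `0 < d`,
`Gz.det = d`. -/

open Matrix
open scoped ComplexOrder

/-- If `(u_1, λ)` is a generalized eigenpair of `(G_z, G_1)`, `U_zᴴ G_z u_1 = 0`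
and `U = [u_1, U_z]` is invertible, then for
`W = [u_1 (u_1ᴴ G_1 u_1)^{−1/2}, U_z (U_zᴴ G_z U_z)^{−1/2}]` we have `λ > 0` and
`|det W| = √λ · (det G_z)^{−1/2}`, where `det G_z` is a positive real number. -/
theorem absDet_of_gevp_form (L : ℕ) (hL : 1 ≤ L)
    (G1 Gz : Matrix (Fin 1 ⊕ Fin L) (Fin 1 ⊕ Fin L) ℂ)
    (hG1 : G1.PosDef) (hGz : Gz.PosDef)
    (u1 : Fin 1 ⊕ Fin L → ℂ) (hu1 : u1 ≠ 0) (lam : ℝ)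
    (hgevp : Gz *ᵥ u1 = (lam : ℂ) • (G1 *ᵥ u1))
    (Uz : Matrix (Fin 1 ⊕ Fin L) (Fin L) ℂ)
    (horth : (Uzᴴ * Gz) *ᵥ u1 = 0)
    (hinv : IsUnit (Matrix.fromCols (Matrix.of fun i (_ : Fin 1) => u1 i) Uz).det) :
    ∀ S : Matrix (Fin L) (Fin L) ℂ, S.PosDef → S * S = Uzᴴ * Gz * Uz →
      ∀ W : Matrix (Fin 1 ⊕ Fin L) (Fin 1 ⊕ Fin L) ℂ,
        W = Matrix.fromCols
          (Matrix.of fun i (_ : Fin 1) =>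
            (((Real.sqrt ((star u1 ⬝ᵥ (G1 *ᵥ u1)).re))⁻¹ : ℝ) : ℂ) * u1 i)
          (Uz * S⁻¹) →
        0 < lam ∧
        ∃ d : ℝ, 0 < d ∧ Gz.det = (d : ℂ) ∧
          ‖W.det‖ = Real.sqrt lam * (Real.sqrt d)⁻¹ := by
  intro S hS hSS W hW
  -- basic positivity facts
  have hp : (0 : ℂ) < star u1 ⬝ᵥ (G1 *ᵥ u1) := hG1.dotProduct_mulVec_pos hu1
  have hq0 : (0 : ℂ) < star u1 ⬝ᵥ (Gz *ᵥ u1) := hGz.dotProduct_mulVec_pos hu1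
  have hpre : 0 < (star u1 ⬝ᵥ (G1 *ᵥ u1)).re := (Complex.lt_def.mp hp).1
  have hpim : (star u1 ⬝ᵥ (G1 *ᵥ u1)).im = 0 := ((Complex.lt_def.mp hp).2).symm
  set p : ℝ := (star u1 ⬝ᵥ (G1 *ᵥ u1)).re with hp_def
  have hpc : star u1 ⬝ᵥ (G1 *ᵥ u1) = (p : ℂ) := Complex.ext rfl hpim
  have hq : star u1 ⬝ᵥ (Gz *ᵥ u1) = (lam : ℂ) * (p : ℂ) := by
    rw [hgevp, dotProduct_smul, smul_eq_mul, hpc]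
  -- lam > 0
  have hlam : 0 < lam := by
    have h1 : 0 < ((lam : ℂ) * (p : ℂ)).re := by
      rw [← hq]; exact (Complex.lt_def.mp hq0).1
    have h2 : ((lam : ℂ) * (p : ℂ)).re = lam * p := by
      simp [Complex.mul_re]
    rw [h2] at h1
    nlinarith
  -- det Gz is a positive real
  have hdz : (0 : ℂ) < Gz.det := hGz.det_pos
  have hdre : 0 < Gz.det.re := (Complex.lt_def.mp hdz).1
  have hdim : Gz.det.im = 0 := ((Complex.lt_def.mp hdz).2).symm
  set d : ℝ := Gz.det.re with hd_def
  have hdc : Gz.det = (d : ℂ) := Complex.ext rfl hdim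
  -- notation for the columns
  set α : ℝ := (Real.sqrt p)⁻¹ with hα_def
  set u : Matrix (Fin 1 ⊕ Fin L) (Fin 1) ℂ := Matrix.of fun i (_ : Fin 1) => u1 i with hu_def
  set c1 : Matrix (Fin 1 ⊕ Fin L) (Fin 1) ℂ :=
    Matrix.of fun i (_ : Fin 1) => ((α : ℝ) : ℂ) * u1 i with hc1_def
  have hc1 : c1 = ((α : ℝ) : ℂ) • u := by
    ext i j; simp [hc1_def, hu_def]
  -- S is invertible and Hermitian
  have hSdet : IsUnit S.det := hS.det_pos.ne'.isUnit
  have hSinv : S⁻¹ * S = 1 := Matrix.nonsing_inv_mul S hSdet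
  have hSinv' : S * S⁻¹ = 1 := Matrix.mul_nonsing_inv S hSdet
  have hSH : (S⁻¹)ᴴ = S⁻¹ := by
    rw [Matrix.conjTranspose_nonsing_inv, hS.1.eq]
  -- Uzᴴ * Gz * u = 0 as a matrix identity
  have h0 : Uzᴴ * Gz * u = 0 := by
    ext i j
    have := congrFun horth i
    simpa [hu_def, mul_apply, mulVec, dotProduct] using this
  -- the scalar block
  have hscal : uᴴ * (Gz * u) = Matrix.of fun _ _ => (lam : ℂ) * (p : ℂ) := by
    ext i j
    simp [hu_def, mul_apply, mulVec, dotProduct, Finset.mul_sum, mul_comm, ← hq]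
  -- the four blocks
  have hA21 : (Uz * S⁻¹)ᴴ * (Gz * c1) = 0 := by
    rw [hc1, Matrix.mul_smul, Matrix.mul_smul, Matrix.conjTranspose_mul, hSH]
    rw [Matrix.mul_assoc, ← Matrix.mul_assoc Uzᴴ Gz u, h0]
    simp
  have hA12 : c1ᴴ * (Gz * (Uz * S⁻¹)) = 0 := by
    have : c1ᴴ * (Gz * (Uz * S⁻¹)) = ((Uz * S⁻¹)ᴴ * (Gz * c1))ᴴ := by
      simp [Matrix.conjTranspose_mul, hGz.1.eq, Matrix.mul_assoc]
    rw [this, hA21]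
    simp
  have hαα : α * α = p⁻¹ := by
    rw [hα_def, ← mul_inv, Real.mul_self_sqrt hpre.le]
  have hr : α * α * (lam * p) = lam := by
    rw [hαα]; field_simp
  have hA11 : c1ᴴ * (Gz * c1) = (lam : ℂ) • 1 := by
    rw [hc1]
    rw [Matrix.conjTranspose_smul, Matrix.mul_smul, Matrix.smul_mul, Matrix.mul_smul,
      smul_smul, hscal]
    ext i j
    have hij : i = j := Subsingleton.elim i j
    subst hij
    simp only [Matrix.smul_apply, Matrix.of_apply, Matrix.one_apply_eq, smul_eq_mul]
    calc star ((α : ℝ) : ℂ) * ((α : ℝ) : ℂ) * ((lam : ℂ) * (p : ℂ))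
        = ((α * α * (lam * p) : ℝ) : ℂ) := by
          push_cast [Complex.star_def, Complex.conj_ofReal]; ring
      _ = (lam : ℂ) * 1 := by rw [hr, mul_one]
  have hA22 : (Uz * S⁻¹)ᴴ * (Gz * (Uz * S⁻¹)) = 1 := by
    rw [Matrix.conjTranspose_mul, hSH]
    calc S⁻¹ * Uzᴴ * (Gz * (Uz * S⁻¹))
        = S⁻¹ * (Uzᴴ * Gz * Uz) * S⁻¹ := by
          simp only [Matrix.mul_assoc]
      _ = S⁻¹ * (S * S) * S⁻¹ := by rw [← hSS]
      _ = (S⁻¹ * S) * (S * S⁻¹) := by simp only [Matrix.mul_assoc]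
      _ = 1 := by rw [hSinv, hSinv']; simp
  -- the key block identity
  have key : Wᴴ * (Gz * W) = Matrix.fromBlocks ((lam : ℂ) • 1) 0 0 1 := by
    rw [hW, Matrix.conjTranspose_fromCols_eq_fromRows_conjTranspose,
      Matrix.mul_fromCols, Matrix.fromRows_mul_fromCols,
      hA11, hA12, hA21, hA22]
  -- take determinants
  have hdet : star W.det * Gz.det * W.det = (lam : ℂ) := by
    have := congrArg Matrix.det key
    rw [Matrix.det_mul, Matrix.det_mul, Matrix.det_conjTranspose,
      Matrix.det_fromBlocks_zero₂₁, Matrix.det_smul, Matrix.det_one, Matrix.det_one] at this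
    rw [mul_assoc]
    simpa using this
  have hdet2 : d * Complex.normSq W.det = lam := by
    have e : ((d : ℂ)) * (W.det * star W.det) = (lam : ℂ) := by
      rw [← hdet, hdc]; ring
    rw [Complex.star_def, Complex.mul_conj] at e
    exact_mod_cast e
  -- final computation
  refine ⟨hlam, d, hdre, hdc, ?_⟩
  have habs : Complex.normSq W.det = ‖W.det‖ ^ 2 := (Complex.sq_norm _).symm
  rw [habs] at hdet2
  have hsd : (0 : ℝ) < Real.sqrt d := Real.sqrt_pos.mpr hdre
  have : Real.sqrt lam = Real.sqrt d * ‖W.det‖ := by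
    rw [← hdet2, Real.sqrt_mul hdre.le, Real.sqrt_sq (norm_nonneg _)]
  rw [this]
  field_simp
end

section
/- Let G be an invertible M×M complex matrix (in particular any positive definite Hermitian matrix), let W = [W_s, W_z] ∈ ℂ^{M×M} be invertible with W_s ∈ ℂ^{M×K} its first K columns, let R ∈ ℂ^{(M−K)×(M−K)} be invertible, and set W′ = [W_s, W_z R]. Then for every k with 1 ≤ k ≤ K, ((W′)^H G)^{−1} e_k = (W^H G)^{−1} e_k. -/
/- STATEMENT 9.
M×M complex matrices are encoded as matrices indexed by `Fin K ⊕ Fin L`,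
where `M = K + L`, `K ≥ 1`, `L = M - K ≥ 1`. For `W`, its first `K` columns
(`Sum.inl`) form `W_s` and its last `L` columns (`Sum.inr`) form `W_z`, so that
`W = fromColumns W_s W_z`; `W' = [W_s, W_z R]` is `fromColumns W_s (W_z * R)`.
`e_k = Pi.single (Sum.inl k) 1` for `k : Fin K`. -/

open Matrix

/-- Replacing `W_z` by `W_z R` (with `R` invertible) does not change
`(Wᴴ G)⁻¹ e_k` for `k = 1, …, K`. -/
theorem inv_WHG_ek_invariant (K L : ℕ) (hK : 1 ≤ K) (hL : 1 ≤ L)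
    (G : Matrix (Fin K ⊕ Fin L) (Fin K ⊕ Fin L) ℂ) (hG : IsUnit G.det)
    (W : Matrix (Fin K ⊕ Fin L) (Fin K ⊕ Fin L) ℂ) (hW : IsUnit W.det)
    (R : Matrix (Fin L) (Fin L) ℂ) (hR : IsUnit R.det)
    (W' : Matrix (Fin K ⊕ Fin L) (Fin K ⊕ Fin L) ℂ)
    (hW' : W' = Matrix.fromCols (W.submatrix id Sum.inl)
      ((W.submatrix id Sum.inr) * R)) :
    ∀ k : Fin K,
      (W'ᴴ * G)⁻¹ *ᵥ Pi.single (Sum.inl k) 1 =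
        (Wᴴ * G)⁻¹ *ᵥ Pi.single (Sum.inl k) 1 := by
  intro k
  set D : Matrix (Fin K ⊕ Fin L) (Fin K ⊕ Fin L) ℂ := Matrix.fromBlocks 1 0 0 R with hD
  have hWD : W' = W * D := by
    subst hW'
    ext i j
    cases j with
    | inl j =>
      simp [hD, Matrix.mul_apply, Fintype.sum_sum_type, Matrix.fromBlocks,
        Matrix.fromCols, Matrix.one_apply, Finset.sum_ite_eq']
    | inr j =>
      simp [hD, Matrix.mul_apply, Fintype.sum_sum_type, Matrix.fromBlocks,
        Matrix.fromCols]
  have hDdet : IsUnit D.det := by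
    rw [hD, Matrix.det_fromBlocks_zero₂₁]
    simpa using hR
  have hDH : IsUnit Dᴴ.det := by
    rw [Matrix.det_conjTranspose]
    exact hDdet.star
  have hinv : (W'ᴴ * G)⁻¹ = (Wᴴ * G)⁻¹ * (Dᴴ)⁻¹ := by
    rw [hWD, Matrix.conjTranspose_mul, Matrix.mul_assoc, Matrix.mul_inv_rev]
  have hDe : Dᴴ *ᵥ Pi.single (Sum.inl k) 1 = Pi.single (Sum.inl k) 1 := by
    ext i
    cases i with
    | inl i =>
      simp [hD, Matrix.mulVec_single, Matrix.conjTranspose_apply,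
        Matrix.fromBlocks, Matrix.one_apply, Pi.single_apply, eq_comm]
    | inr i =>
      simp [hD, Matrix.mulVec_single, Matrix.conjTranspose_apply,
        Matrix.fromBlocks, Pi.single_apply]
  have hDinv : (Dᴴ)⁻¹ *ᵥ Pi.single (Sum.inl k) 1 = Pi.single (Sum.inl k) 1 := by
    conv_lhs => rw [← hDe]
    rw [Matrix.mulVec_mulVec, Matrix.nonsing_inv_mul _ hDH, Matrix.one_mulVec]
  rw [hinv, ← Matrix.mulVec_mulVec, hDinv]
end

section
/- Let G_z be an invertible M×M complex matrix (in particular any positive definite Hermitian matrix), let W = [W_s, W_z] ∈ ℂ^{M×M} be invertible with W_s ∈ ℂ^{M×K} its first K columns, let R ∈ ℂ^{(M−K)×(M−K)} be invertible, and set W′ = [W_s, W_z R]. Then the column space of ((W′)^H G_z)^{−1} E_z equals the column space of (W^H G_z)^{−1} E_z. -/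
/- STATEMENT 10.
M×M complex matrices are encoded as matrices indexed by `Fin K ⊕ Fin L`,
where `M = K + L`, `K ≥ 1`, `L = M - K ≥ 1`. For `W`, its first `K` columns
(`Sum.inl`) form `W_s` and its last `L` columns (`Sum.inr`) form `W_z`.
`E_z = [e_{K+1}, …, e_M]`. The column space of a matrix `A` is
`Submodule.span ℂ (Set.range Aᵀ)` (the span of the columns of `A`, i.e. of the
rows of `Aᵀ`). -/

open Matrix

lemma colSpace_mul_right_inv {n m : Type*} [Fintype n] [Fintype m] [DecidableEq m]
    (A : Matrix n m ℂ) (S : Matrix m m ℂ) (hS : IsUnit S.det) :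
    Submodule.span ℂ (Set.range (A * S)ᵀ) = Submodule.span ℂ (Set.range Aᵀ) := by
  change Submodule.span ℂ (Set.range (A * S).col) = Submodule.span ℂ (Set.range A.col)
  rw [← Matrix.range_mulVecLin, ← Matrix.range_mulVecLin, Matrix.mulVecLin_mul,
    LinearMap.range_comp, LinearMap.range_eq_top.mpr, Submodule.map_top]
  exact Matrix.mulVec_surjective_iff_isUnit.mpr ((Matrix.isUnit_iff_isUnit_det S).mpr hS)

/-- Replacing `W_z` by `W_z R` (with `R` invertible) does not change the column
space of `(Wᴴ G_z)⁻¹ E_z`. -/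
theorem colSpace_inv_WHGz_Ez_invariant (K L : ℕ) (hK : 1 ≤ K) (hL : 1 ≤ L)
    (Gz : Matrix (Fin K ⊕ Fin L) (Fin K ⊕ Fin L) ℂ) (hGz : IsUnit Gz.det)
    (W : Matrix (Fin K ⊕ Fin L) (Fin K ⊕ Fin L) ℂ) (hW : IsUnit W.det)
    (R : Matrix (Fin L) (Fin L) ℂ) (hR : IsUnit R.det)
    (W' : Matrix (Fin K ⊕ Fin L) (Fin K ⊕ Fin L) ℂ)
    (hW' : W' = Matrix.fromCols (W.submatrix id Sum.inl)
      ((W.submatrix id Sum.inr) * R)) :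
    Submodule.span ℂ (Set.range ((W'ᴴ * Gz)⁻¹ * Ez K L)ᵀ) =
      Submodule.span ℂ (Set.range ((Wᴴ * Gz)⁻¹ * Ez K L)ᵀ) := by
  set D : Matrix (Fin K ⊕ Fin L) (Fin K ⊕ Fin L) ℂ := Matrix.fromBlocks 1 0 0 R with hD
  have hWD : W' = W * D := by
    subst hW'
    ext i j
    cases j with
    | inl j =>
      simp [hD, Matrix.mul_apply, Matrix.fromBlocks, Matrix.fromCols,
        Fintype.sum_sum_type, Matrix.one_apply]
    | inr j =>
      simp [hD, Matrix.mul_apply, Matrix.fromBlocks, Matrix.fromCols,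
        Fintype.sum_sum_type, Finset.mul_sum, mul_comm]
  have hRH : IsUnit Rᴴ.det := by
    rw [Matrix.det_conjTranspose]; exact hR.star
  -- inverse of Dᴴ
  have hDHinv : (Dᴴ)⁻¹ = Matrix.fromBlocks 1 0 0 (Rᴴ)⁻¹ := by
    apply Matrix.inv_eq_left_inv
    rw [hD]
    simp [Matrix.fromBlocks_conjTranspose, Matrix.fromBlocks_multiply,
      Matrix.nonsing_inv_mul _ hRH]
  have hEz : (Dᴴ)⁻¹ * Ez K L = Ez K L * (Rᴴ)⁻¹ := by
    rw [hDHinv]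
    ext i j
    cases i with
    | inl i =>
      simp [Ez, Matrix.mul_apply, Matrix.fromBlocks, Fintype.sum_sum_type,
        Matrix.one_apply]
    | inr i =>
      simp [Ez, Matrix.mul_apply, Matrix.fromBlocks, Fintype.sum_sum_type,
        Matrix.one_apply]
  have key : (W'ᴴ * Gz)⁻¹ * Ez K L = ((Wᴴ * Gz)⁻¹ * Ez K L) * (Rᴴ)⁻¹ := by
    rw [hWD, Matrix.conjTranspose_mul, Matrix.mul_assoc, Matrix.mul_inv_rev,
      Matrix.mul_assoc, hEz, ← Matrix.mul_assoc]
  rw [key]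
  exact colSpace_mul_right_inv _ _ (Matrix.isUnit_nonsing_inv_det _ hRH)
end

section
/- Let G_z be a positive definite Hermitian M×M complex matrix and let W = [W_s, W_z] ∈ ℂ^{M×M} be invertible with W_s ∈ ℂ^{M×K} its first K columns. Suppose the K×K matrix W_s^H G_z E_s is invertible, and define V ∈ ℂ^{M×(M−K)} as the block matrix whose top K×(M−K) block is −(W_s^H G_z E_s)^{−1}(W_s^H G_z E_z) and whose bottom (M−K)×(M−K) block is the identity I_{M−K}. Then the column space of V equals the column space of U_z = (W^H G_z)^{−1} E_z, and both equal the kernel of the linear map v ↦ W_s^H G_z v on ℂ^M. -/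
/- STATEMENT 11.
M×M complex matrices are encoded as matrices indexed by `Fin K ⊕ Fin L`,
where `M = K + L`, `K ≥ 1`, `L = M - K ≥ 1`. For `W`, its first `K` columns
(`Sum.inl`) form `W_s`. `E_s = [e_1, …, e_K]`, `E_z = [e_{K+1}, …, e_M]`.
The block matrix `V` with top block `−(W_sᴴ G_z E_s)⁻¹(W_sᴴ G_z E_z)` and bottom
block `I` is `Matrix.fromRows`. The column space of `A` is
`Submodule.span ℂ (Set.range Aᵀ)`; the linear map `v ↦ W_sᴴ G_z v` is
`(W_sᴴ * G_z).mulVecLin`. -/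

open Matrix
open scoped ComplexOrder

/-- `E_s = [e_1, …, e_K]`. -/
def Es (K L : ℕ) : Matrix (Fin K ⊕ Fin L) (Fin K) ℂ :=
  Matrix.of fun i j => if i = Sum.inl j then 1 else 0

lemma EsT_mul (K L : ℕ) {n : Type*} [Fintype n] (M : Matrix (Fin K ⊕ Fin L) n ℂ) :
    (Es K L)ᵀ * M = M.submatrix Sum.inl id := by
  ext i j
  simp [Es, Matrix.mul_apply, eq_comm]

lemma EzT_mul (K L : ℕ) {n : Type*} [Fintype n] (M : Matrix (Fin K ⊕ Fin L) n ℂ) :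
    (Ez K L)ᵀ * M = M.submatrix Sum.inr id := by
  ext i j
  simp [Ez, Matrix.mul_apply, eq_comm]

lemma mul_Es (K L : ℕ) {n : Type*} [Fintype n] (M : Matrix n (Fin K ⊕ Fin L) ℂ) :
    M * Es K L = M.submatrix id Sum.inl := by
  ext i j
  simp [Es, Matrix.mul_apply]

lemma mul_Ez (K L : ℕ) {n : Type*} [Fintype n] (M : Matrix n (Fin K ⊕ Fin L) ℂ) :
    M * Ez K L = M.submatrix id Sum.inr := by
  ext i j
  simp [Ez, Matrix.mul_apply]

lemma EsT_Es (K L : ℕ) : (Es K L)ᵀ * Es K L = 1 := by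
  rw [EsT_mul]; ext i j; simp [Es, Matrix.one_apply]

lemma EzT_Ez (K L : ℕ) : (Ez K L)ᵀ * Ez K L = 1 := by
  rw [EzT_mul]; ext i j; simp [Ez, Matrix.one_apply]

lemma EsT_Ez (K L : ℕ) : (Es K L)ᵀ * Ez K L = 0 := by
  rw [EsT_mul]; ext i j; simp [Ez]

lemma EzT_Es (K L : ℕ) : (Ez K L)ᵀ * Es K L = 0 := by
  rw [EzT_mul]; ext i j; simp [Es]

-- general span=ker lemma
lemma span_eq_ker_of {m n p : Type*} [Fintype m] [Fintype n] [Fintype p] [DecidableEq n]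
    (A : Matrix p m ℂ) (M : Matrix m n ℂ) (C : Matrix n m ℂ)
    (hC : C * M = 1) (hAM : A * M = 0)
    (hker : Module.finrank ℂ (LinearMap.ker A.mulVecLin) = Fintype.card n) :
    Submodule.span ℂ (Set.range Mᵀ) = LinearMap.ker A.mulVecLin := by
  classical
  change Submodule.span ℂ (Set.range M.col) = _
  rw [← Matrix.range_mulVecLin]
  have hinj : Function.Injective M.mulVecLin := by
    have h : C.mulVecLin ∘ₗ M.mulVecLin = LinearMap.id := by
      rw [← Matrix.mulVecLin_mul, hC, Matrix.mulVecLin_one]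
    intro x y hxy
    have := congrArg C.mulVecLin hxy
    simpa [Matrix.mulVecLin_apply, Matrix.mulVec_mulVec, hC, Matrix.one_mulVec] using this
  apply Submodule.eq_of_le_of_finrank_eq
  · rw [LinearMap.range_le_ker_iff, ← Matrix.mulVecLin_mul, hAM, Matrix.mulVecLin_zero]
  · rw [LinearMap.finrank_range_of_inj hinj, hker,
      Module.finrank_fintype_fun_eq_card]

/-- The column space of
`V = [−(W_sᴴ G_z E_s)⁻¹(W_sᴴ G_z E_z); I]` equals the column space of
`U_z = (Wᴴ G_z)⁻¹ E_z`, and both equal the kernel of `v ↦ W_sᴴ G_z v`. -/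
theorem colSpace_V_eq_colSpace_Uz (K L : ℕ) (hK : 1 ≤ K) (hL : 1 ≤ L)
    (Gz : Matrix (Fin K ⊕ Fin L) (Fin K ⊕ Fin L) ℂ) (hGz : Gz.PosDef)
    (W : Matrix (Fin K ⊕ Fin L) (Fin K ⊕ Fin L) ℂ) (hW : IsUnit W.det)
    (Ws : Matrix (Fin K ⊕ Fin L) (Fin K) ℂ) (hWs : Ws = W.submatrix id Sum.inl)
    (hinv : IsUnit (Wsᴴ * Gz * Es K L).det)
    (V : Matrix (Fin K ⊕ Fin L) (Fin L) ℂ)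
    (hV : V = Matrix.fromRows
      (-((Wsᴴ * Gz * Es K L)⁻¹ * (Wsᴴ * Gz * Ez K L))) (1 : Matrix (Fin L) (Fin L) ℂ))
    (Uz : Matrix (Fin K ⊕ Fin L) (Fin L) ℂ) (hUz : Uz = (Wᴴ * Gz)⁻¹ * Ez K L) :
    Submodule.span ℂ (Set.range Vᵀ) = Submodule.span ℂ (Set.range Uzᵀ) ∧
    Submodule.span ℂ (Set.range Uzᵀ) = LinearMap.ker (Wsᴴ * Gz).mulVecLin := by
  classical
  set N := Wᴴ * Gz with hN
  have hNdet : IsUnit N.det := by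
    rw [hN, Matrix.det_mul, Matrix.det_conjTranspose]
    exact hW.star.mul ((Matrix.isUnit_iff_isUnit_det Gz).mp hGz.isUnit)
  have hWsH : Wsᴴ = (Es K L)ᵀ * Wᴴ := by
    rw [hWs, Matrix.conjTranspose_submatrix, EsT_mul]
  have hA : Wsᴴ * Gz = (Es K L)ᵀ * N := by
    rw [hWsH, Matrix.mul_assoc, ← hN]
  -- surjectivity of the kernel map
  have hsurjmat : (Wsᴴ * Gz) * (N⁻¹ * Es K L) = 1 := by
    rw [hA, Matrix.mul_assoc, ← Matrix.mul_assoc N, Matrix.mul_nonsing_inv _ hNdet, Matrix.one_mul, EsT_Es]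
  have hkerdim : Module.finrank ℂ (LinearMap.ker (Wsᴴ * Gz).mulVecLin) = L := by
    have hcomp : (Wsᴴ * Gz).mulVecLin ∘ₗ (N⁻¹ * Es K L).mulVecLin = LinearMap.id := by
      rw [← Matrix.mulVecLin_mul, hsurjmat, Matrix.mulVecLin_one]
    have hsurj : Function.Surjective (Wsᴴ * Gz).mulVecLin := fun v =>
      ⟨(N⁻¹ * Es K L).mulVecLin v, by rw [← LinearMap.comp_apply, hcomp]; rfl⟩
    have hrn := LinearMap.finrank_range_add_finrank_ker (Wsᴴ * Gz).mulVecLin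
    rw [LinearMap.range_eq_top.mpr hsurj, finrank_top] at hrn
    simp [Module.finrank_fintype_fun_eq_card] at hrn
    omega
  -- A * V = 0
  have h1 : (Wsᴴ * Gz).toCols₁ = Wsᴴ * Gz * Es K L := by rw [mul_Es]; rfl
  have h2 : (Wsᴴ * Gz).toCols₂ = Wsᴴ * Gz * Ez K L := by rw [mul_Ez]; rfl
  have hV0 : (Wsᴴ * Gz) * V = 0 := by
    rw [hV]
    nth_rewrite 1 [← Matrix.fromCols_toCols (Wsᴴ * Gz)]
    rw [Matrix.fromCols_mul_fromRows, h1, h2, Matrix.mul_one, Matrix.mul_neg, ← Matrix.mul_assoc,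
      Matrix.mul_nonsing_inv _ hinv, Matrix.one_mul, neg_add_cancel]
  -- A * Uz = 0
  have hUz0 : (Wsᴴ * Gz) * Uz = 0 := by
    rw [hA, hUz, Matrix.mul_assoc, ← Matrix.mul_assoc N, Matrix.mul_nonsing_inv _ hNdet, Matrix.one_mul, EsT_Ez]
  -- left inverses
  have hCV : (Ez K L)ᵀ * V = 1 := by
    rw [hV, EzT_mul]; ext i j; simp [Matrix.one_apply]
  have hCU : ((Ez K L)ᵀ * N) * Uz = 1 := by
    rw [hUz, Matrix.mul_assoc, ← Matrix.mul_assoc N, Matrix.mul_nonsing_inv _ hNdet, Matrix.one_mul, EzT_Ez]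
  have hcard : Module.finrank ℂ (LinearMap.ker (Wsᴴ * Gz).mulVecLin)
      = Fintype.card (Fin L) := by rw [hkerdim, Fintype.card_fin]
  have e1 := span_eq_ker_of (Wsᴴ * Gz) V ((Ez K L)ᵀ) hCV hV0 hcard
  have e2 := span_eq_ker_of (Wsᴴ * Gz) Uz ((Ez K L)ᵀ * N) hCU hUz0 hcard
  exact ⟨e1.trans e2.symm, e2⟩
end

section
/- Let G_z be a positive definite Hermitian M×M complex matrix, let W⁰ = [W_s, W_z⁰] ∈ ℂ^{M×M} be invertible with W_s ∈ ℂ^{M×K} its first K columns, and define U_z = ((W⁰)^H G_z)^{−1} E_z ∈ ℂ^{M×(M−K)}. Then a matrix W_z ∈ ℂ^{M×(M−K)} satisfies W_s^H G_z W_z = 0 (the K×(M−K) zero matrix) if and only if there exists B ∈ ℂ^{(M−K)×(M−K)} such that W_z = U_z B. -/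
/- STATEMENT 12.
M×M complex matrices are encoded as matrices indexed by `Fin K ⊕ Fin L`,
where `M = K + L`, `K ≥ 1`, `L = M - K ≥ 1`. For `W⁰`, its first `K` columns
(`Sum.inl`) form `W_s`. `E_z = [e_{K+1}, …, e_M]`. -/

open Matrix
open scoped ComplexOrder

/-- With `U_z = ((W⁰)ᴴ G_z)⁻¹ E_z`, a matrix `W_z` satisfies `W_sᴴ G_z W_z = 0`
iff `W_z = U_z B` for some `B`. -/
theorem orth_iff_factor_through_Uz (K L : ℕ) (hK : 1 ≤ K) (hL : 1 ≤ L)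
    (Gz : Matrix (Fin K ⊕ Fin L) (Fin K ⊕ Fin L) ℂ) (hGz : Gz.PosDef)
    (W0 : Matrix (Fin K ⊕ Fin L) (Fin K ⊕ Fin L) ℂ) (hW0 : IsUnit W0.det)
    (Ws : Matrix (Fin K ⊕ Fin L) (Fin K) ℂ) (hWs : Ws = W0.submatrix id Sum.inl)
    (Uz : Matrix (Fin K ⊕ Fin L) (Fin L) ℂ) (hUz : Uz = (W0ᴴ * Gz)⁻¹ * Ez K L) :
    ∀ Wz : Matrix (Fin K ⊕ Fin L) (Fin L) ℂ,
      Wsᴴ * Gz * Wz = 0 ↔ ∃ B : Matrix (Fin L) (Fin L) ℂ, Wz = Uz * B := by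
  intro Wz
  set A := W0ᴴ * Gz with hA
  have hAdet : IsUnit A.det := by
    rw [hA, Matrix.det_mul, Matrix.det_conjTranspose]
    exact (hW0.star).mul hGz.det_pos.ne'.isUnit
  have hAinv : A * A⁻¹ = 1 := Matrix.mul_nonsing_inv A hAdet
  have hAinv' : A⁻¹ * A = 1 := Matrix.nonsing_inv_mul A hAdet
  -- key: (Wsᴴ * Gz * Wz) i j = (A * Wz) (Sum.inl i) j
  have key : ∀ i j, (Wsᴴ * Gz * Wz) i j = (A * Wz) (Sum.inl i) j := by
    intro i j
    simp only [Matrix.mul_apply, hWs, hA, Matrix.conjTranspose_apply,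
      Matrix.submatrix_apply, id_eq, Finset.sum_mul, Finset.mul_sum, mul_assoc]
  constructor
  · intro h
    refine ⟨(A * Wz).submatrix Sum.inr id, ?_⟩
    have hE : Ez K L * (A * Wz).submatrix Sum.inr id = A * Wz := by
      ext i j
      rw [Matrix.mul_apply]
      cases i with
      | inl i =>
        have := key i j
        rw [h] at this
        simp [Ez, ← this]
      | inr i =>
        rw [Finset.sum_eq_single i]
        · simp [Ez]
        · intro b _ hb
          simp [Ez, hb, Ne.symm hb]
        · simp
    calc Wz = (A⁻¹ * A) * Wz := by rw [hAinv', Matrix.one_mul]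
      _ = A⁻¹ * (A * Wz) := by rw [Matrix.mul_assoc]
      _ = A⁻¹ * (Ez K L * (A * Wz).submatrix Sum.inr id) := by rw [hE]
      _ = Uz * (A * Wz).submatrix Sum.inr id := by rw [hUz]; exact (Matrix.mul_assoc _ _ _).symm
  · rintro ⟨B, rfl⟩
    ext i j
    rw [key i j]
    have : A * (Uz * B) = Ez K L * B := by
      rw [hUz, ← Matrix.mul_assoc, ← Matrix.mul_assoc, hAinv, Matrix.one_mul]
    rw [this]
    simp [Matrix.mul_apply, Ez]
end
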